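/- arXiv:0809.3546 — 3 statements merged into one kernel-verified Lean document; each statement's English description precedes it below -/
import Mathlib

section
/- Let q be a prime power, n, m positive integers, and ρ, t, ρ', t' nonnegative integers with 2t' + ρ' ≤ 2t + ρ. Let {X_s}_{s∈S} be a family of subsets of Fq^{n×m} indexed by a set S, and for nonnegative integers a, b define Y^{a,b}_{(s)} = ⋃_{x ∈ X_s} Y^{a,b}_x. If the sets Y^{ρ,t}_{(s)}, s ∈ S, are pairwise disjoint, then the sets Y^{ρ',t'}_{(s)}, s ∈ S, are also pairwise disjoint. -/
set_option autoImplicit false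

open Matrix

/-- The fan-out set `Y^{ρ,t}_x`. -/
def fanOut {F : Type*} [Field F] [Fintype F] {n m : ℕ} (ρ t : ℕ)
    (x : Matrix (Fin n) (Fin m) F) :
    Set (Matrix (Fin n) (Fin n) F × Matrix (Fin n) (Fin m) F) :=
  {p | n - ρ ≤ p.1.rank ∧ ∃ Z : Matrix (Fin n) (Fin m) F, Z.rank ≤ t ∧ p.2 = p.1 * x + Z}

section Aux

variable {F : Type*} [Field F] {n m : ℕ}

open Module LinearMap

/-- Rank-nullity for the restriction of a map to a submodule. -/
lemma aux_finrank_map_add_inf_ker {V V' : Type*} [AddCommGroup V] [Module F V]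
    [AddCommGroup V'] [Module F V'] [FiniteDimensional F V]
    (f : V →ₗ[F] V') (W : Submodule F V) :
    finrank F (W.map f) + finrank F ↥(W ⊓ LinearMap.ker f) = finrank F W := by
  have h := LinearMap.finrank_range_add_finrank_ker (f.domRestrict W)
  rw [LinearMap.range_domRestrict, LinearMap.ker_domRestrict] at h
  have h2 : finrank F ↥(W ⊓ LinearMap.ker f)
      = finrank F ↥(Submodule.comap W.subtype (LinearMap.ker f)) := by
    rw [← Submodule.map_comap_subtype, Submodule.finrank_map_subtype_eq]
  omega

lemma aux_finrank_map_add_le {V V' : Type*} [AddCommGroup V] [Module F V]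
    [AddCommGroup V'] [Module F V'] [FiniteDimensional F V]
    (f : V →ₗ[F] V') (W U : Submodule F V) (hUW : U ≤ W) (hUk : U ≤ LinearMap.ker f) :
    finrank F (W.map f) + finrank F U ≤ finrank F W := by
  have h := aux_finrank_map_add_inf_ker f W
  have : finrank F U ≤ finrank F ↥(W ⊓ LinearMap.ker f) :=
    Submodule.finrank_mono (le_inf hUW hUk)
  omega

lemma aux_finrank_le_map_add_ker {V V' : Type*} [AddCommGroup V] [Module F V]
    [AddCommGroup V'] [Module F V'] [FiniteDimensional F V]
    (f : V →ₗ[F] V') (W : Submodule F V) :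
    finrank F W ≤ finrank F (W.map f) + finrank F (LinearMap.ker f) := by
  have h := aux_finrank_map_add_inf_ker f W
  have : finrank F ↥(W ⊓ LinearMap.ker f) ≤ finrank F (LinearMap.ker f) :=
    Submodule.finrank_mono inf_le_right
  omega

lemma aux_rank_mul (A : Matrix (Fin n) (Fin n) F) (D : Matrix (Fin n) (Fin m) F) :
    (A * D).rank = finrank F ((LinearMap.range D.mulVecLin).map A.mulVecLin) := by
  rw [Matrix.rank, Matrix.mulVecLin_mul, LinearMap.range_comp]

lemma aux_rank_add_le (A B : Matrix (Fin n) (Fin m) F) :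
    (A + B).rank ≤ A.rank + B.rank := by
  have hle : LinearMap.range (A + B).mulVecLin ≤
      LinearMap.range A.mulVecLin ⊔ LinearMap.range B.mulVecLin := by
    rintro x ⟨v, rfl⟩
    rw [Matrix.mulVecLin_add]
    exact Submodule.add_mem_sup ⟨v, rfl⟩ ⟨v, rfl⟩
  have h1 : (A + B).rank ≤
      finrank F ↥(LinearMap.range A.mulVecLin ⊔ LinearMap.range B.mulVecLin) :=
    Submodule.finrank_mono hle
  have h2 := Submodule.finrank_sup_add_finrank_inf_eq
    (LinearMap.range A.mulVecLin) (LinearMap.range B.mulVecLin)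
  have e1 : (A + B).rank = finrank F (LinearMap.range (A + B).mulVecLin) := rfl
  have e2 : A.rank = finrank F (LinearMap.range A.mulVecLin) := rfl
  have e3 : B.rank = finrank F (LinearMap.range B.mulVecLin) := rfl
  omega

lemma aux_rank_neg (A : Matrix (Fin n) (Fin m) F) : (-A).rank = A.rank := by
  have : (-A).mulVecLin = -A.mulVecLin := by
    ext v i
    simp [Matrix.mulVecLin_apply, Matrix.neg_mulVec]
  rw [Matrix.rank, this, LinearMap.range_neg, Matrix.rank]

lemma aux_rank_sub_le (A B : Matrix (Fin n) (Fin m) F) :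
    (A - B).rank ≤ A.rank + B.rank := by
  rw [sub_eq_add_neg]
  calc (A + -B).rank ≤ A.rank + (-B).rank := aux_rank_add_le A (-B)
    _ = A.rank + B.rank := by rw [aux_rank_neg]

/-- There exists a submodule of any prescribed dimension inside `W`. -/
lemma aux_exists_submodule {V : Type*} [AddCommGroup V] [Module F V]
    [FiniteDimensional F V] (W : Submodule F V) (k : ℕ) (hk : k ≤ finrank F W) :
    ∃ U : Submodule F V, U ≤ W ∧ finrank F U = k := by
  classical
  let b := Module.finBasis F W
  have hli : LinearIndependent F (fun i : Fin (finrank F W) => (b i : V)) :=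
    b.linearIndependent.map' W.subtype (Submodule.ker_subtype W)
  have hli' : LinearIndependent F (fun i : Fin k => (b (Fin.castLE hk i) : V)) :=
    hli.comp (Fin.castLE hk) (Fin.castLE_injective hk)
  refine ⟨Submodule.span F (Set.range fun i : Fin k => (b (Fin.castLE hk i) : V)), ?_, ?_⟩
  · rw [Submodule.span_le]
    rintro x ⟨i, rfl⟩
    exact (b (Fin.castLE hk i)).2
  · rw [finrank_span_eq_card hli', Fintype.card_fin]

/-- A projection matrix onto `U` along `U₀`. -/
lemma aux_exists_proj (U U₀ : Submodule F (Fin n → F)) (h : IsCompl U U₀) :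
    ∃ P : Matrix (Fin n) (Fin n) F, P.rank = finrank F U ∧
      (∀ x ∈ U₀, P.mulVecLin x = 0) ∧ ∀ x ∈ U, P.mulVecLin x = x := by
  classical
  set f : (Fin n → F) →ₗ[F] (Fin n → F) :=
    U.subtype ∘ₗ U.projectionOnto U₀ h
  have hmv : (LinearMap.toMatrix' f).mulVecLin = f := by
    rw [← Matrix.toLin'_apply', Matrix.toLin'_toMatrix']
  have hrange : LinearMap.range f = U := by
    rw [LinearMap.range_comp, Submodule.linearProjOfIsCompl_range h, Submodule.map_top,
      Submodule.range_subtype]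
  refine ⟨LinearMap.toMatrix' f, ?_, ?_, ?_⟩
  · rw [Matrix.rank, hmv, hrange]
  · intro x hx
    rw [hmv]
    simp [f, Submodule.linearProjOfIsCompl_apply_right' h hx]
  · intro x hx
    rw [hmv]
    simp [f, Submodule.linearProjOfIsCompl_apply_left h ⟨x, hx⟩]

lemma aux_ker_finrank (A : Matrix (Fin n) (Fin n) F) :
    finrank F (LinearMap.ker A.mulVecLin) = n - A.rank ∧ A.rank ≤ n := by
  have h := LinearMap.finrank_range_add_finrank_ker A.mulVecLin
  rw [Module.finrank_fin_fun] at h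
  rw [Matrix.rank]
  omega

/-- Splitting a matrix of rank `≤ 2t` as a sum of two matrices of rank `≤ t`. -/
lemma aux_split (M : Matrix (Fin n) (Fin m) F) (t : ℕ) (hM : M.rank ≤ 2 * t) :
    ∃ M₁ M₂ : Matrix (Fin n) (Fin m) F, M₁.rank ≤ t ∧ M₂.rank ≤ t ∧ M = M₁ + M₂ := by
  have hrk : M.rank = finrank F (LinearMap.range M.mulVecLin) := rfl
  obtain ⟨U, hUW, hU⟩ := aux_exists_submodule (LinearMap.range M.mulVecLin) (min t M.rank)
    (by rw [← hrk]; exact min_le_right _ _)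
  obtain ⟨U₀, hcompl⟩ := Submodule.exists_isCompl U
  obtain ⟨P, hPrank, hPker, hPid⟩ := aux_exists_proj U U₀ hcompl
  refine ⟨P * M, M - P * M, ?_, ?_, by abel⟩
  · calc (P * M).rank ≤ P.rank := Matrix.rank_mul_le_left P M
      _ = min t M.rank := by rw [hPrank, hU]
      _ ≤ t := min_le_left _ _
  · have hfact : M - P * M = (1 - P) * M := by
      rw [Matrix.sub_mul, Matrix.one_mul]
    rw [hfact, aux_rank_mul]
    have hker : U ≤ LinearMap.ker (1 - P).mulVecLin := by
      intro x hx
      have h1 : (1 - P).mulVecLin x = x - P.mulVecLin x := by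
        simp [Matrix.mulVecLin_apply, Matrix.sub_mulVec, Matrix.one_mulVec]
      rw [LinearMap.mem_ker, h1, hPid x hx, sub_self]
    have hle := aux_finrank_map_add_le (1 - P).mulVecLin
      (LinearMap.range M.mulVecLin) U hUW hker
    rcases min_choice t M.rank with h | h <;> omega

/-- Backward construction: if `rank (x₁ - x₂) ≤ 2t + ρ` then the fan-out sets intersect. -/
lemma aux_fanOut_inter_nonempty [Fintype F] (ρ t : ℕ) (x₁ x₂ : Matrix (Fin n) (Fin m) F)
    (hrk : (x₁ - x₂).rank ≤ 2 * t + ρ) :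
    ((fanOut ρ t x₁) ∩ (fanOut ρ t x₂)).Nonempty := by
  classical
  set D := x₁ - x₂ with hD
  have hrkW : D.rank = finrank F (LinearMap.range D.mulVecLin) := rfl
  obtain ⟨U₀, hU₀W, hU₀⟩ := aux_exists_submodule (LinearMap.range D.mulVecLin) (min ρ D.rank)
    (by rw [← hrkW]; exact min_le_right _ _)
  obtain ⟨U, hcompl⟩ := Submodule.exists_isCompl U₀
  obtain ⟨A, hArank, hAker, _⟩ := aux_exists_proj U U₀ hcompl.symm
  -- rank of A
  have hfin : finrank F U + finrank F U₀ = n := by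
    have := Submodule.finrank_add_eq_of_isCompl hcompl.symm
    rwa [Module.finrank_fin_fun] at this
  have hArank' : A.rank = n - min ρ D.rank := by omega
  -- rank of A * D
  have hADle : (A * D).rank ≤ D.rank - min ρ D.rank := by
    have hker : U₀ ≤ LinearMap.ker A.mulVecLin := fun x hx =>
      LinearMap.mem_ker.mpr (hAker x hx)
    have h5 := aux_finrank_map_add_le A.mulVecLin
      (LinearMap.range D.mulVecLin) U₀ hU₀W hker
    rw [← aux_rank_mul] at h5
    omega
  have hAD2t : (A * D).rank ≤ 2 * t := by
    rcases min_choice ρ D.rank with h | h <;> omega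
  obtain ⟨M₁, M₂, hM₁, hM₂, hsplit⟩ := aux_split (A * D) t hAD2t
  refine ⟨(A, A * x₁ + (-M₁)), ⟨?_, -M₁, ?_, rfl⟩, ?_, M₂, hM₂, ?_⟩
  · rw [hArank']
    exact Nat.sub_le_sub_left (min_le_left _ _) n
  · rw [aux_rank_neg]; exact hM₁
  · rw [hArank']
    exact Nat.sub_le_sub_left (min_le_left _ _) n
  · show A * x₁ + -M₁ = A * x₂ + M₂
    have h6 : A * x₁ - A * x₂ = M₁ + M₂ := by
      rw [← Matrix.mul_sub, ← hD, ← hsplit]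
    have h2 : A * x₁ = A * x₂ + (M₁ + M₂) := by
      rw [← h6]; abel
    rw [h2]; abel

/-- Forward: a common fan-out point forces `rank (x₁ - x₂) ≤ 2t + ρ`. -/
lemma aux_fanOut_inter_rank_le [Fintype F] (ρ t : ℕ) (x₁ x₂ : Matrix (Fin n) (Fin m) F)
    (h : ((fanOut ρ t x₁) ∩ (fanOut ρ t x₂)).Nonempty) :
    (x₁ - x₂).rank ≤ 2 * t + ρ := by
  obtain ⟨⟨A, y⟩, ⟨hA₁, Z₁, hZ₁, hy₁⟩, _, Z₂, hZ₂, hy₂⟩ := h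
  have hA₁' : n - ρ ≤ A.rank := hA₁
  set D := x₁ - x₂ with hD
  have hAD : A * D = Z₂ - Z₁ := by
    have heq : A * x₁ + Z₁ = A * x₂ + Z₂ := by rw [← hy₁, ← hy₂]
    rw [hD, Matrix.mul_sub, sub_eq_sub_iff_add_eq_add, heq]
    abel
  have hADrank : (A * D).rank ≤ 2 * t := by
    rw [hAD]
    calc (Z₂ - Z₁).rank ≤ Z₂.rank + Z₁.rank := aux_rank_sub_le Z₂ Z₁
      _ ≤ 2 * t := by omega
  obtain ⟨hkerA, hArank⟩ := aux_ker_finrank A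
  have hkerle : finrank F (LinearMap.ker A.mulVecLin) ≤ ρ := by omega
  have hle := aux_finrank_le_map_add_ker A.mulVecLin (LinearMap.range D.mulVecLin)
  rw [← aux_rank_mul] at hle
  have : D.rank = finrank F (LinearMap.range D.mulVecLin) := rfl
  omega

end Aux

/-- If a (possibly stochastic) encoder with supports `Xs s`, `s ∈ S`, is universally
`t`-error-`ρ`-erasure-correcting and `2t' + ρ' ≤ 2t + ρ`, then it is also universally
`t'`-error-`ρ'`-erasure-correcting. -/
theorem fanOut_union_pairwise_disjoint_mono
    (q : ℕ) (hq : IsPrimePow q) (n m : ℕ) (hn : 0 < n) (hm : 0 < m)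
    (ρ t ρ' t' : ℕ) (hle : 2 * t' + ρ' ≤ 2 * t + ρ)
    (F : Type) [Field F] [Fintype F] (hF : Fintype.card F = q)
    (S : Type) (Xs : S → Set (Matrix (Fin n) (Fin m) F))
    (hdisj : ∀ s₁ s₂ : S, s₁ ≠ s₂ →
      (⋃ x ∈ Xs s₁, fanOut ρ t x) ∩ (⋃ x ∈ Xs s₂, fanOut ρ t x) = ∅) :
    ∀ s₁ s₂ : S, s₁ ≠ s₂ →
      (⋃ x ∈ Xs s₁, fanOut ρ' t' x) ∩ (⋃ x ∈ Xs s₂, fanOut ρ' t' x) = ∅ := by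
  intro s₁ s₂ hne
  rw [Set.eq_empty_iff_forall_notMem]
  rintro p ⟨hp₁, hp₂⟩
  simp only [Set.mem_iUnion] at hp₁ hp₂
  obtain ⟨x₁, hx₁, hpx₁⟩ := hp₁
  obtain ⟨x₂, hx₂, hpx₂⟩ := hp₂
  -- from the intersection in the primed fan-outs, rank (x₁ - x₂) ≤ 2t' + ρ' ≤ 2t + ρ
  have hrk : (x₁ - x₂).rank ≤ 2 * t + ρ :=
    le_trans (aux_fanOut_inter_rank_le ρ' t' x₁ x₂ ⟨p, hpx₁, hpx₂⟩) hle
  -- hence the unprimed fan-outs intersect, contradicting hdisj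
  obtain ⟨p', hp'₁, hp'₂⟩ := aux_fanOut_inter_nonempty ρ t x₁ x₂ hrk
  have : p' ∈ (⋃ x ∈ Xs s₁, fanOut ρ t x) ∩ (⋃ x ∈ Xs s₂, fanOut ρ t x) := by
    constructor <;> simp only [Set.mem_iUnion]
    · exact ⟨x₁, hx₁, hp'₁⟩
    · exact ⟨x₂, hx₂, hp'₂⟩
  rw [hdisj s₁ s₂ hne] at this
  exact this
end

section
/- Let q be a prime power and L a field extension of Fq of degree m. Let 1 ≤ k < n, let H ∈ L^{k×n} have rank k, and let C = {x ∈ L^n : Hx = 0}. Let S be uniformly distributed on L^k and let X be a random variable with values in L^n whose conditional distribution given S = s is uniform on the coset {x ∈ L^n : Hx = s} for each s. If I(S; BX) = 0 for every matrix B ∈ Fq^{(n−k)×n} (acting on L^n via the embedding Fq ⊆ L), then m ≥ n and the minimum rank distance of C equals k + 1 (i.e., C is an MRD code). -/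
set_option autoImplicit false

open Matrix MeasureTheory
open scoped ENNReal

/-- Shannon entropy (in nats) of a finitely-valued random variable. -/
noncomputable def entropy {Ω α : Type*} [Fintype α] [MeasurableSpace Ω]
    (P : Measure Ω) (X : Ω → α) : ℝ :=
  - ∑ a : α, (P {ω | X ω = a}).toReal * Real.log (P {ω | X ω = a}).toReal

/-- Mutual information (in nats) `I(X;Y) = H(X) + H(Y) - H(X,Y)`. -/
noncomputable def mutualInfo {Ω α β : Type*} [Fintype α] [Fintype β] [MeasurableSpace Ω]
    (P : Measure Ω) (X : Ω → α) (Y : Ω → β) : ℝ :=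
  entropy P X + entropy P Y - entropy P (fun ω => (X ω, Y ω))

/-- The rank weight of `x ∈ L^n`: the dimension over `F` of the `F`-span of its coordinates. -/
noncomputable def rankWeight (F : Type*) {L : Type*} [Field F] [Field L] [Algebra F L]
    {n : ℕ} (x : Fin n → L) : ℕ :=
  Module.finrank F (Submodule.span F (Set.range x))

/-- The minimum rank distance of a code `C ⊆ L^n` equals `d`. -/
def minRankDistEq (F : Type*) {L : Type*} [Field F] [Field L] [Algebra F L]
    {n : ℕ} (C : Set (Fin n → L)) (d : ℕ) : Prop :=
  IsLeast {e | ∃ x ∈ C, ∃ y ∈ C, x ≠ y ∧ rankWeight F (x - y) = e} d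

lemma meas_comp_eq_sum {Ω : Type*} [Fintype Ω] [MeasurableSpace Ω] [MeasurableSingletonClass Ω]
    (P : Measure Ω) {γ α : Type*} [Fintype γ] [DecidableEq γ] [DecidableEq α]
    (X : Ω → γ) (f : γ → α) (a : α) :
    P {ω | f (X ω) = a} = ∑ x ∈ Finset.univ.filter (fun x => f x = a), P {ω | X ω = x} := by
  have hset : {ω | f (X ω) = a}
      = ⋃ x ∈ Finset.univ.filter (fun x => f x = a), {ω | X ω = x} := by
    ext ω; simp
  rw [hset, measure_biUnion_finset]
  · intro x _ y _ hxy
    simp only [Function.onFun]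
    apply Set.disjoint_left.mpr
    intro ω h1 h2
    exact hxy ((h1 : X ω = x).symm.trans h2)
  · intro x _
    exact (Set.toFinite _).measurableSet

lemma meas_sum_one {Ω : Type*} [Fintype Ω] [MeasurableSpace Ω] [MeasurableSingletonClass Ω]
    (P : Measure Ω) [IsProbabilityMeasure P] {γ : Type*} [Fintype γ] [DecidableEq γ]
    (X : Ω → γ) :
    ∑ x : γ, P {ω | X ω = x} = 1 := by
  have hset : (Set.univ : Set Ω) = ⋃ x ∈ (Finset.univ : Finset γ), {ω | X ω = x} := by
    ext ω; simp
  have h := measure_biUnion_finset (μ := P)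
    (s := (Finset.univ : Finset γ)) (f := fun x => {ω | X ω = x})
    (by intro x _ y _ hxy
        simp only [Function.onFun]
        apply Set.disjoint_left.mpr
        intro ω h1 h2
        exact hxy ((h1 : X ω = x).symm.trans h2))
    (fun x _ => (Set.toFinite _).measurableSet)
  rw [← hset] at h
  simpa using h.symm

lemma entropy_map_linear {Ω : Type*} [Fintype Ω] [MeasurableSpace Ω] [MeasurableSingletonClass Ω]
    (P : Measure Ω) [IsProbabilityMeasure P]
    {n : ℕ} {L : Type*} [Field L] [Fintype L]
    (X : Ω → Fin n → L) (c : ℝ≥0∞) (hX : ∀ x, P {ω | X ω = x} = c)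
    {W : Type*} [Fintype W] [AddCommGroup W] [Module L W]
    (f : (Fin n → L) →ₗ[L] W) :
    entropy P (fun ω => f (X ω))
      = (Module.finrank L (LinearMap.range f)) * Real.log (Fintype.card L) := by
  classical
  set q : ℕ := Fintype.card L with hq
  have hq2 : 2 ≤ q := Fintype.one_lt_card
  have hDcard : Fintype.card (Fin n → L) = q ^ n := by
    simp [Fintype.card_fun, hq]
  -- value of c
  have hsum : ((q : ℝ≥0∞)) ^ n * c = 1 := by
    have h := meas_sum_one P X
    simp only [hX, Finset.sum_const, nsmul_eq_mul, Finset.card_univ, hDcard] at h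
    push_cast at h
    exact h
  have hqn0 : ((q : ℝ≥0∞) ^ n) ≠ 0 := by positivity
  have hqntop : ((q : ℝ≥0∞) ^ n) ≠ ∞ := ENNReal.pow_ne_top (ENNReal.natCast_ne_top q)
  have hc : c = ((q : ℝ≥0∞) ^ n)⁻¹ := by
    have h2 := congrArg (fun z => ((q : ℝ≥0∞) ^ n)⁻¹ * z) hsum
    simpa [← mul_assoc, ENNReal.inv_mul_cancel hqn0 hqntop] using h2
  -- cardinalities
  set dr : ℕ := Module.finrank L (LinearMap.range f) with hdr
  set dk : ℕ := Module.finrank L (LinearMap.ker f) with hdk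
  have hrn : dr + dk = n := by
    have := LinearMap.finrank_range_add_finrank_ker f
    rwa [Module.finrank_pi, Fintype.card_fin] at this
  have hK : Fintype.card (LinearMap.ker f) = q ^ dk := Module.card_eq_pow_finrank
  have hR : Fintype.card (LinearMap.range f) = q ^ dr := Module.card_eq_pow_finrank
  -- fiber counts
  have hfiber : ∀ a : W, a ∈ LinearMap.range f →
      (Finset.univ.filter (fun x => f x = a)).card = q ^ dk := by
    intro a ha
    obtain ⟨x₀, hx₀⟩ := ha
    rw [← Fintype.card_subtype, ← hK]
    apply Fintype.card_congr
    refine ⟨fun x => ⟨x.1 - x₀, ?_⟩, fun y => ⟨y.1 + x₀, ?_⟩, ?_, ?_⟩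
    · simp [LinearMap.mem_ker, map_sub, x.2, hx₀]
    · have := y.2
      rw [LinearMap.mem_ker] at this
      simp [map_add, this, hx₀]
    · intro x; ext; simp
    · intro y; ext; simp
  have hfiber0 : ∀ a : W, a ∉ LinearMap.range f →
      (Finset.univ.filter (fun x => f x = a)) = ∅ := by
    intro a ha
    apply Finset.filter_eq_empty_iff.mpr
    intro x _ hx
    exact ha ⟨x, hx⟩
  -- probability of each value
  have hPval : ∀ a : W, P {ω | f (X ω) = a}
      = if a ∈ LinearMap.range f then (q:ℝ≥0∞)^dk * ((q : ℝ≥0∞) ^ n)⁻¹ else 0 := by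
    intro a
    rw [meas_comp_eq_sum P X f a]
    simp only [hX, hc, Finset.sum_const, nsmul_eq_mul]
    by_cases ha : a ∈ LinearMap.range f
    · rw [if_pos ha, hfiber a ha]; push_cast; ring
    · rw [if_neg ha, hfiber0 a ha]; simp
  have hval : ((q:ℝ≥0∞)^dk * ((q : ℝ≥0∞) ^ n)⁻¹).toReal = ((q:ℝ)^dr)⁻¹ := by
    rw [ENNReal.toReal_mul, ENNReal.toReal_inv]
    have h1 : ((q:ℝ≥0∞)^dk).toReal = (q:ℝ)^dk := by simp
    have h2 : ((q:ℝ≥0∞)^n).toReal = (q:ℝ)^n := by simp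
    have hqr : (q:ℝ) ≠ 0 := by positivity
    rw [h1, h2, ← hrn, pow_add]
    field_simp
  -- compute entropy
  unfold entropy
  have hsplit : ∀ a : W, (P {ω | f (X ω) = a}).toReal * Real.log (P {ω | f (X ω) = a}).toReal
      = if a ∈ LinearMap.range f then ((q:ℝ)^dr)⁻¹ * Real.log (((q:ℝ)^dr)⁻¹) else 0 := by
    intro a
    rw [hPval a]
    by_cases ha : a ∈ LinearMap.range f
    · rw [if_pos ha, if_pos ha, hval]
    · simp [ha]
  rw [Finset.sum_congr rfl (fun a _ => hsplit a), ← Finset.sum_filter, Finset.sum_const]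
  have hcardfilter : (Finset.univ.filter (fun a => a ∈ LinearMap.range f)).card = q ^ dr := by
    rw [← hR]
    have h3 := (Fintype.card_subtype (fun a => a ∈ LinearMap.range f)).symm
    convert h3 using 2
  rw [hcardfilter, nsmul_eq_mul, Real.log_inv, Real.log_pow]
  have hqr0 : ((q:ℝ))^dr ≠ 0 := by positivity
  push_cast
  field_simp

lemma mulVec_map_algebraMap {F L : Type*} [CommSemiring F] [CommSemiring L] [Algebra F L]
    {a b : ℕ} (B : Matrix (Fin a) (Fin b) F) (w : Fin b → F) :
    (B.map (algebraMap F L)) *ᵥ (fun j => algebraMap F L (w j))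
      = fun i => algebraMap F L ((B *ᵥ w) i) := by
  funext i
  simp [Matrix.mulVec, dotProduct, map_sum, _root_.map_mul, Matrix.map_apply]

lemma mulVecLin_map_surjective {F L : Type*} [Field F] [Field L] [Algebra F L]
    {a b : ℕ} (B : Matrix (Fin a) (Fin b) F)
    (h : Function.Surjective (fun v => B *ᵥ v)) :
    Function.Surjective (B.map (algebraMap F L)).mulVecLin := by
  classical
  intro y
  choose v hv using fun i : Fin a => h (Pi.single i 1)
  refine ⟨∑ i, y i • (fun j => algebraMap F L (v i j)), ?_⟩
  rw [map_sum]
  have hterm : ∀ i : Fin a,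
      (B.map (algebraMap F L)).mulVecLin (y i • fun j => algebraMap F L (v i j))
        = Pi.single i (y i) := by
    intro i
    rw [_root_.map_smul]
    have h1 : (B.map (algebraMap F L)).mulVecLin (fun j => algebraMap F L (v i j))
        = fun i' => algebraMap F L ((B *ᵥ v i) i') := by
      rw [Matrix.mulVecLin_apply]
      exact mulVec_map_algebraMap B (v i)
    rw [h1]
    have h2 : (fun i' => algebraMap F L ((B *ᵥ v i) i')) = Pi.single i (1:L) := by
      funext i'
      rw [show B *ᵥ v i = Pi.single i 1 from hv i]
      simp [Pi.single_apply, apply_ite (algebraMap F L)]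
    rw [h2]
    funext i'
    simp [Pi.single_apply]
  rw [Finset.sum_congr rfl (fun i _ => hterm i)]
  exact Finset.univ_sum_single y

lemma exists_annihilator_matrix {F : Type*} [Field F] {n k : ℕ} (hkn : k ≤ n)
    (W₀ : Submodule F (Fin n → F)) (hW : Module.finrank F W₀ ≤ k) :
    ∃ B : Matrix (Fin (n-k)) (Fin n) F,
      (∀ v ∈ W₀, B *ᵥ v = 0) ∧ Function.Surjective (fun v => B *ᵥ v) := by
  have hq : Module.finrank F ((Fin n → F) ⧸ W₀) + Module.finrank F W₀ = n := by
    have := Submodule.finrank_quotient_add_finrank W₀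
    rwa [Module.finrank_pi, Fintype.card_fin] at this
  have hnk : n - k ≤ Module.finrank F ((Fin n → F) ⧸ W₀) := by omega
  let bq := Module.finBasis F ((Fin n → F) ⧸ W₀)
  let g : (Fin n → F) →ₗ[F] (Fin (n-k) → F) :=
    (LinearMap.funLeft F F (Fin.castLE hnk)) ∘ₗ (bq.equivFun.toLinearMap ∘ₗ W₀.mkQ)
  have hBg : ∀ v, (LinearMap.toMatrix' g) *ᵥ v = g v := by
    intro v
    rw [← Matrix.toLin'_apply, Matrix.toLin'_toMatrix']
  refine ⟨LinearMap.toMatrix' g, ?_, ?_⟩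
  · intro v hv
    rw [hBg]
    have : W₀.mkQ v = 0 := (Submodule.Quotient.mk_eq_zero W₀).mpr hv
    simp [g, this]
  · intro y
    obtain ⟨z, hz⟩ := LinearMap.funLeft_surjective_of_injective F F _
      (Fin.castLE_injective hnk) y
    obtain ⟨w, hw⟩ := bq.equivFun.surjective z
    obtain ⟨v, hv⟩ := W₀.mkQ_surjective w
    exact ⟨v, by show LinearMap.toMatrix' g *ᵥ v = y; rw [hBg]; simp [g, hv, hw, hz]⟩

lemma inf_ker_eq_bot {F L : Type*} [Field F] [Field L] [Fintype L] [Algebra F L]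
    {n k : ℕ}
    (H : Matrix (Fin k) (Fin n) L) (hH : H.rank = k)
    (B : Matrix (Fin (n-k)) (Fin n) F)
    (hsurj : Function.Surjective (B.map (algebraMap F L)).mulVecLin)
    (hadd : Module.finrank L
        (LinearMap.range ((H.mulVecLin).prod (B.map (algebraMap F L)).mulVecLin))
      = Module.finrank L (LinearMap.range H.mulVecLin)
        + Module.finrank L (LinearMap.range (B.map (algebraMap F L)).mulVecLin)) :
    LinearMap.ker H.mulVecLin ⊓ LinearMap.ker (B.map (algebraMap F L)).mulVecLin = ⊥ := by
  set BL := B.map (algebraMap F L) with hBL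
  have hrB : Module.finrank L (LinearMap.range BL.mulVecLin) = n - k := by
    rw [LinearMap.range_eq_top.mpr hsurj, finrank_top, Module.finrank_pi, Fintype.card_fin]
  have hrH : Module.finrank L (LinearMap.range H.mulVecLin) = k := hH
  have hrn := LinearMap.finrank_range_add_finrank_ker ((H.mulVecLin).prod BL.mulVecLin)
  rw [Module.finrank_pi, Fintype.card_fin, hadd, hrB, hrH, LinearMap.ker_prod] at hrn
  have hk0 : Module.finrank L
      ((LinearMap.ker H.mulVecLin) ⊓ (LinearMap.ker BL.mulVecLin) :
        Submodule L (Fin n → L)) = 0 := by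
    have hkn' : k + (n - k) = n := by
      by_contra hne
      have hkn2 : n < k := by omega
      -- if n < k then rank H ≤ n < k contradicts hH? rank ≤ card n
      have := Matrix.rank_le_card_width H
      simp [hH, Fintype.card_fin] at this
      omega
    omega
  exact Submodule.finrank_eq_zero.mp hk0

lemma rankWeight_lower_bound {F L : Type*} [Field F] [Field L] [Fintype L] [Algebra F L]
    {n k : ℕ} (hkn : k ≤ n)
    (H : Matrix (Fin k) (Fin n) L)
    (hB : ∀ B : Matrix (Fin (n-k)) (Fin n) F,
      Function.Surjective (B.map (algebraMap F L)).mulVecLin →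
      LinearMap.ker H.mulVecLin ⊓ LinearMap.ker (B.map (algebraMap F L)).mulVecLin = ⊥)
    (c : Fin n → L) (hc : H *ᵥ c = 0) (hc0 : c ≠ 0) :
    k + 1 ≤ rankWeight F c := by
  classical
  by_contra hlt
  push_neg at hlt
  have hwk : Module.finrank F (Submodule.span F (Set.range c)) ≤ k := by
    unfold rankWeight at hlt; omega
  set V := Submodule.span F (Set.range c) with hV
  have hmem : ∀ j, c j ∈ V := fun j => Submodule.subset_span ⟨j, rfl⟩
  set d := Module.finrank F V with hd
  have hdk : d ≤ k := hwk
  let bb := Module.finBasis F V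
  let u : Fin n → Fin d → F := fun j i => (bb.repr ⟨c j, hmem j⟩) i
  have hrepr : ∀ j, c j = ∑ i, algebraMap F L (u j i) * ((bb i : V) : L) := by
    intro j
    have h := bb.sum_repr ⟨c j, hmem j⟩
    have h2 : c j = ((∑ i, (bb.repr ⟨c j, hmem j⟩) i • bb i : V) : L) :=
      (congrArg (Subtype.val) h).symm
    rw [h2, AddSubmonoidClass.coe_finset_sum]
    apply Finset.sum_congr rfl
    intro i _
    rw [SetLike.val_smul, Algebra.smul_def]
  let uvec : Fin d → (Fin n → F) := fun i j => u j i
  have hW : Module.finrank F (Submodule.span F (Set.range uvec)) ≤ k := by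
    have h1 := finrank_span_le_card (R := F) (Set.range uvec)
    have h2 : (Set.range uvec).toFinset.card ≤ d := by
      rw [Set.toFinset_card]
      exact le_trans (Fintype.card_range_le uvec) (by simp)
    omega
  obtain ⟨B, hB0, hBsurj⟩ := exists_annihilator_matrix hkn _ hW
  have hker := hB B (mulVecLin_map_surjective B hBsurj)
  have hcdecomp : c = ∑ i, ((bb i : V) : L) • (fun j => algebraMap F L (uvec i j)) := by
    funext j
    rw [Finset.sum_apply, hrepr j]
    apply Finset.sum_congr rfl
    intro i _
    simp only [Pi.smul_apply, smul_eq_mul, uvec]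
    ring
  have hcB : (B.map (algebraMap F L)).mulVecLin c = 0 := by
    rw [hcdecomp, map_sum]
    apply Finset.sum_eq_zero
    intro i _
    rw [_root_.map_smul]
    have h3 : (B.map (algebraMap F L)).mulVecLin (fun j => algebraMap F L (uvec i j))
        = fun i' => algebraMap F L ((B *ᵥ uvec i) i') := by
      rw [Matrix.mulVecLin_apply]; exact mulVec_map_algebraMap B (uvec i)
    rw [h3, hB0 (uvec i) (Submodule.subset_span ⟨i, rfl⟩)]
    have h4 : (fun i' : Fin (n-k) => algebraMap F L ((0 : Fin (n-k) → F) i')) = 0 := by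
      funext i'; simp
    rw [h4, smul_zero]
  have hcmem : c ∈ LinearMap.ker H.mulVecLin ⊓ LinearMap.ker (B.map (algebraMap F L)).mulVecLin :=
    Submodule.mem_inf.mpr ⟨LinearMap.mem_ker.mpr (by rw [Matrix.mulVecLin_apply]; exact hc),
      LinearMap.mem_ker.mpr hcB⟩
  rw [hker] at hcmem
  exact hc0 ((Submodule.mem_bot _).mp hcmem)

lemma rankWeight_le_of_range_subset {F L : Type*} [Field F] [Field L] [Algebra F L]
    [FiniteDimensional F L]
    {n : ℕ} (x : Fin n → L) {t : ℕ} (a : Fin t → L)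
    (h : Set.range x ⊆ insert 0 (Set.range a)) : rankWeight F x ≤ t := by
  classical
  unfold rankWeight
  have h1 : Submodule.span F (Set.range x) ≤ Submodule.span F (insert 0 (Set.range a)) :=
    Submodule.span_mono h
  rw [Submodule.span_insert_zero] at h1
  have h2 := Submodule.finrank_mono h1
  have h3 := finrank_span_le_card (R := F) (Set.range a)
  have h4 : (Set.range a).toFinset.card ≤ t := by
    rw [Set.toFinset_card]
    exact le_trans (Fintype.card_range_le a) (by simp)
  omega

lemma exists_codeword_weight {F L : Type*} [Field F] [Field L] [Fintype L] [Algebra F L]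
    {n k : ℕ} (hkn : k < n)
    (H : Matrix (Fin k) (Fin n) L) (hH : H.rank = k)
    (hmin : ∀ c : Fin n → L, H *ᵥ c = 0 → c ≠ 0 → k + 1 ≤ rankWeight F c) :
    ∃ c : Fin n → L, H *ᵥ c = 0 ∧ c ≠ 0 ∧ rankWeight F c = k + 1 := by
  classical
  set C' := LinearMap.ker H.mulVecLin with hC'
  have hnk : n - k ≤ n := Nat.sub_le n k
  set π : (Fin n → L) →ₗ[L] (Fin (n-k) → L) := LinearMap.funLeft L L (Fin.castLE hnk) with hπ
  have hub : ∀ x : Fin n → L, (∀ j : Fin (n-k), x (Fin.castLE hnk j) = 0) →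
      rankWeight F x ≤ k := by
    intro x hx
    apply rankWeight_le_of_range_subset x (fun i : Fin k => x ⟨n - k + i.1, by omega⟩)
    rintro y ⟨j, rfl⟩
    by_cases hj : (j : ℕ) < n - k
    · left
      have := hx ⟨j.1, hj⟩
      rwa [show Fin.castLE hnk ⟨j.1, hj⟩ = j from Fin.ext rfl] at this
    · right
      exact ⟨⟨j.1 - (n - k), by omega⟩, by apply congrArg x; apply Fin.ext; simp; omega⟩
  have hinj : Function.Injective (π.comp C'.subtype) := by
    apply LinearMap.ker_eq_bot.mp
    apply LinearMap.ker_eq_bot'.mpr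
    intro x hx
    by_contra hx0
    have hxne : (x : Fin n → L) ≠ 0 := fun h0 => hx0 (Subtype.ext h0)
    have hwt := hmin x.1 x.2 hxne
    have hzero : ∀ j : Fin (n-k), (x : Fin n → L) (Fin.castLE hnk j) = 0 := by
      intro j
      exact congrFun (show π x.1 = 0 from hx) j
    have := hub x.1 hzero
    omega
  have hkerdim : Module.finrank L C' = n - k := by
    show Module.finrank L (LinearMap.ker H.mulVecLin) = n - k
    have h5 := LinearMap.finrank_range_add_finrank_ker H.mulVecLin
    rw [Module.finrank_pi, Fintype.card_fin] at h5
    have h6 : Module.finrank L (LinearMap.range H.mulVecLin) = k := hH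
    omega
  have hcard : Fintype.card C' = Fintype.card (Fin (n-k) → L) := by
    rw [Fintype.card_fun, Fintype.card_fin]
    rw [show Fintype.card C' = Fintype.card L ^ Module.finrank L C' from Module.card_eq_pow_finrank]
    rw [hkerdim]
  have hbij : Function.Bijective (π.comp C'.subtype) :=
    (Fintype.bijective_iff_injective_and_card _).mpr ⟨hinj, hcard⟩
  set y0 : Fin (n-k) → L := fun j => if (j : ℕ) = 0 then 1 else 0 with hy0
  obtain ⟨x, hx⟩ := hbij.surjective y0
  have hxne : x.1 ≠ 0 := by
    intro h0
    have h1 : π (0 : Fin n → L) = y0 := by rw [← h0]; exact hx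
    have h2 := congrFun h1 ⟨0, by omega⟩
    simp [hy0] at h2
  refine ⟨x.1, x.2, hxne, ?_⟩
  · have hge := hmin x.1 x.2 hxne
    have hle : rankWeight F x.1 ≤ k + 1 := by
      apply rankWeight_le_of_range_subset x.1
        (Fin.cons 1 (fun i : Fin k => x.1 ⟨n - k + i.1, by omega⟩))
      rintro y ⟨j, rfl⟩
      rw [Fin.range_cons]
      obtain ⟨jv, hjv⟩ := j
      by_cases hj : jv < n - k
      · have h1 : x.1 ⟨jv, hjv⟩ = y0 ⟨jv, hj⟩ :=
          congrFun (show π x.1 = y0 from hx) ⟨jv, hj⟩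
        rw [h1, hy0]
        by_cases hj0 : jv = 0
        · simp [hj0]
        · simp [hj0]
      · right; right
        exact ⟨⟨jv - (n - k), by omega⟩, by apply congrArg x.1; apply Fin.ext; simp; omega⟩
    omega

lemma n_le_finrank {F L : Type*} [Field F] [Field L] [Fintype L] [Algebra F L]
    {n k : ℕ} (hk : 1 ≤ k) (hkn : k < n)
    (H : Matrix (Fin k) (Fin n) L) (hH : H.rank = k)
    (hmin : ∀ c : Fin n → L, H *ᵥ c = 0 → c ≠ 0 → k + 1 ≤ rankWeight F c)
    (hex : ∃ c : Fin n → L, H *ᵥ c = 0 ∧ c ≠ 0 ∧ rankWeight F c = k + 1) :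
    n ≤ Module.finrank F L := by
  classical
  set m' := Module.finrank F L with hm'
  -- m' ≥ k + 1
  obtain ⟨c₀, hc₀, hc₀0, hc₀w⟩ := hex
  have hm'k : k + 1 ≤ m' := by
    rw [← hc₀w]
    unfold rankWeight
    exact Submodule.finrank_le _
  set r := m' - k with hr
  have hrm : r ≤ m' := Nat.sub_le _ _
  let bL := Module.finBasis F L
  -- the F-linear "truncated coordinate" map
  let Φ : (Fin n → L) →ₗ[F] Matrix (Fin n) (Fin r) F :=
    { toFun := fun x => Matrix.of (fun j i => bL.repr (x j) (Fin.castLE hrm i))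
      map_add' := by
        intro x y
        ext j i
        simp [Matrix.of_apply, Pi.add_apply]
      map_smul' := by
        intro a x
        ext j i
        simp [Matrix.of_apply, Pi.smul_apply] }
  set C' := LinearMap.ker H.mulVecLin with hC'
  let ΦC : C' →ₗ[F] Matrix (Fin n) (Fin r) F := Φ.comp (C'.subtype.restrictScalars F)
  have hinj : Function.Injective ΦC := by
    apply LinearMap.ker_eq_bot.mp
    apply LinearMap.ker_eq_bot'.mpr
    intro x hx
    by_contra hx0
    have hxne : (x : Fin n → L) ≠ 0 := fun h0 => hx0 (Subtype.ext h0)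
    have hge := hmin x.1 x.2 hxne
    -- every coordinate lies in the span of the last k basis vectors
    have hmem : ∀ j : Fin n, (x : Fin n → L) j ∈
        Submodule.span F (Set.range (fun t : Fin k => bL ⟨r + t.1, by omega⟩)) := by
      intro j
      rw [← Module.Basis.sum_repr bL ((x : Fin n → L) j)]
      apply Submodule.sum_mem
      intro i _
      by_cases hi : i.1 < r
      · have h0 : bL.repr ((x : Fin n → L) j) i = 0 := by
          have h1 := congrFun (congrFun (congrArg Matrix.of.symm (show ΦC x = 0 from hx)) j) ⟨i.1, hi⟩
          simpa [ΦC, Φ] using h1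
        rw [h0, zero_smul]
        exact Submodule.zero_mem _
      · apply Submodule.smul_mem
        apply Submodule.subset_span
        exact ⟨⟨i.1 - r, by omega⟩, by apply congrArg bL; apply Fin.ext; simp; omega⟩
    have hle : rankWeight F (x : Fin n → L) ≤ k := by
      unfold rankWeight
      have h2 : Submodule.span F (Set.range (x : Fin n → L)) ≤
          Submodule.span F (Set.range (fun t : Fin k => bL ⟨r + t.1, by omega⟩)) := by
        apply Submodule.span_le.mpr
        rintro y ⟨j, rfl⟩
        exact hmem j
      have h3 := Submodule.finrank_mono h2
      have h4 := finrank_span_le_card (R := F)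
        (Set.range (fun t : Fin k => bL ⟨r + t.1, by omega⟩))
      have h5 : (Set.range (fun t : Fin k => bL ⟨r + t.1, by omega⟩)).toFinset.card ≤ k := by
        rw [Set.toFinset_card]
        exact le_trans (Fintype.card_range_le _) (by simp)
      omega
    omega
  -- dimension count
  have hkerdim : Module.finrank L C' = n - k := by
    show Module.finrank L (LinearMap.ker H.mulVecLin) = n - k
    have h5 := LinearMap.finrank_range_add_finrank_ker H.mulVecLin
    rw [Module.finrank_pi, Fintype.card_fin] at h5
    have h6 : Module.finrank L (LinearMap.range H.mulVecLin) = k := hH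
    omega
  have hdimle := LinearMap.finrank_le_finrank_of_injective hinj
  have hdom : Module.finrank F C' = m' * (n - k) := by
    rw [← Module.finrank_mul_finrank F L C', hkerdim]
  have hcodim : Module.finrank F (Matrix (Fin n) (Fin r) F) = n * r := by
    rw [Module.finrank_matrix]
    simp
  rw [hdom, hcodim] at hdimle
  -- arithmetic: m' * (n - k) ≤ n * (m' - k) → n ≤ m'
  by_contra hcon
  push_neg at hcon
  have e1 : m' * (n - k) = m' * n - m' * k := Nat.mul_sub m' n k
  have e2 : n * r = n * m' - n * k := by
    rw [hr]; exact Nat.mul_sub n m' k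
  rw [e1, e2] at hdimle
  have e3 : m' * k ≤ m' * n := Nat.mul_le_mul_left _ (by omega)
  have e4 : n * k ≤ n * m' := Nat.mul_le_mul_left _ (by omega)
  have e5 : m' * n = n * m' := Nat.mul_comm _ _
  have e6 : n * k ≤ m' * k := by omega
  have e7 : m' * k < n * k :=
    (Nat.mul_lt_mul_right (show 0 < k by omega)).mpr hcon
  omega

lemma mutualInfo_zero_rank {Ω : Type*} [Fintype Ω] [MeasurableSpace Ω]
    [MeasurableSingletonClass Ω]
    (P : Measure Ω) [IsProbabilityMeasure P]
    {n : ℕ} {L : Type*} [Field L] [Fintype L]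
    (X : Ω → Fin n → L) (c : ℝ≥0∞) (hX : ∀ x, P {ω | X ω = x} = c)
    {W₁ W₂ : Type*} [Fintype W₁] [AddCommGroup W₁] [Module L W₁]
    [Fintype W₂] [AddCommGroup W₂] [Module L W₂]
    (f : (Fin n → L) →ₗ[L] W₁) (g : (Fin n → L) →ₗ[L] W₂)
    (h : mutualInfo P (fun ω => f (X ω)) (fun ω => g (X ω)) = 0) :
    Module.finrank L (LinearMap.range (f.prod g))
      = Module.finrank L (LinearMap.range f) + Module.finrank L (LinearMap.range g) := by
  have e1 := entropy_map_linear P X c hX f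
  have e2 := entropy_map_linear P X c hX g
  have e3 := entropy_map_linear P X c hX (f.prod g)
  unfold mutualInfo at h
  rw [e1, e2] at h
  have e3' : entropy P (fun ω => (f (X ω), g (X ω)))
      = (Module.finrank L (LinearMap.range (f.prod g))) * Real.log (Fintype.card L) := e3
  rw [e3'] at h
  have hlog : 0 < Real.log (Fintype.card L) :=
    Real.log_pos (by exact_mod_cast (Fintype.one_lt_card : 1 < Fintype.card L))
  have h2 : ((Module.finrank L (LinearMap.range f) : ℝ)
      + (Module.finrank L (LinearMap.range g) : ℝ)
      - (Module.finrank L (LinearMap.range (f.prod g)) : ℝ))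
      * Real.log (Fintype.card L) = 0 := by
    rw [show ((Module.finrank L (LinearMap.range f) : ℝ)
      + (Module.finrank L (LinearMap.range g) : ℝ)
      - (Module.finrank L (LinearMap.range (f.prod g)) : ℝ))
      * Real.log (Fintype.card L)
      = (Module.finrank L (LinearMap.range f) : ℝ) * Real.log (Fintype.card L)
        + (Module.finrank L (LinearMap.range g) : ℝ) * Real.log (Fintype.card L)
        - (Module.finrank L (LinearMap.range (f.prod g)) : ℝ) * Real.log (Fintype.card L)
      from by ring]
    linarith [h]
  rcases mul_eq_zero.mp h2 with h3 | h3
  · have h4 : (Module.finrank L (LinearMap.range (f.prod g)) : ℝ)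
        = (Module.finrank L (LinearMap.range f) : ℝ)
          + (Module.finrank L (LinearMap.range g) : ℝ) := by linarith
    exact_mod_cast h4
  · linarith

/-- Converse to MRD coset coding: if the message `S = HX` is uniform on `L^k`, `X` is
conditionally uniform on each coset `{x : Hx = s}`, and `I(S;BX) = 0` for every
`B ∈ F^{(n-k)×n}`, then `m ≥ n` and the code `C = {x : Hx = 0}` has minimum rank
distance `k + 1` (i.e., `C` is MRD). -/
theorem cosetCoding_secure_implies_MRD
    (q m : ℕ) (hq : IsPrimePow q)
    (F L : Type) [Field F] [Fintype F] (hF : Fintype.card F = q)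
    [Field L] [Fintype L] [Algebra F L] (hm : Module.finrank F L = m)
    (n k : ℕ) (hk : 1 ≤ k) (hkn : k < n)
    (H : Matrix (Fin k) (Fin n) L) (hH : H.rank = k)
    (Ω : Type) [Fintype Ω] [MeasurableSpace Ω] [MeasurableSingletonClass Ω]
    (P : Measure Ω) [IsProbabilityMeasure P]
    (X : Ω → Fin n → L)
    (hSunif : ∀ s₁ s₂ : Fin k → L,
      P {ω | H *ᵥ X ω = s₁} = P {ω | H *ᵥ X ω = s₂})
    (hXunif : ∀ x₁ x₂ : Fin n → L, H *ᵥ x₁ = H *ᵥ x₂ →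
      P {ω | X ω = x₁} = P {ω | X ω = x₂})
    (hsec : ∀ B : Matrix (Fin (n - k)) (Fin n) F,
      mutualInfo P (fun ω => H *ᵥ X ω)
        (fun ω => (B.map (algebraMap F L)) *ᵥ X ω) = 0) :
    n ≤ m ∧ minRankDistEq F {x : Fin n → L | H *ᵥ x = 0} (k + 1) := by
  classical
  -- Step 1: X is uniformly distributed
  have pconst : ∀ x₁ x₂ : Fin n → L, P {ω | X ω = x₁} = P {ω | X ω = x₂} := by
    intro x₁ x₂
    have hf1 := meas_comp_eq_sum P X (fun x => H *ᵥ x) (H *ᵥ x₁)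
    have hf2 := meas_comp_eq_sum P X (fun x => H *ᵥ x) (H *ᵥ x₂)
    have hs1 : ∑ x ∈ Finset.univ.filter (fun x => H *ᵥ x = H *ᵥ x₁), P {ω | X ω = x}
        = (Finset.univ.filter (fun x => H *ᵥ x = H *ᵥ x₁)).card • P {ω | X ω = x₁} := by
      rw [Finset.sum_congr rfl (fun x hx => hXunif x x₁ (Finset.mem_filter.mp hx).2),
        Finset.sum_const]
    have hs2 : ∑ x ∈ Finset.univ.filter (fun x => H *ᵥ x = H *ᵥ x₂), P {ω | X ω = x}
        = (Finset.univ.filter (fun x => H *ᵥ x = H *ᵥ x₂)).card • P {ω | X ω = x₂} := by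
      rw [Finset.sum_congr rfl (fun x hx => hXunif x x₂ (Finset.mem_filter.mp hx).2),
        Finset.sum_const]
    have hcards : (Finset.univ.filter (fun x => H *ᵥ x = H *ᵥ x₁)).card
        = (Finset.univ.filter (fun x => H *ᵥ x = H *ᵥ x₂)).card := by
      apply Finset.card_bij (fun (x : Fin n → L) _ => x - x₁ + x₂)
      · intro a ha
        rw [Finset.mem_filter] at ha ⊢
        refine ⟨Finset.mem_univ _, ?_⟩
        rw [Matrix.mulVec_add, Matrix.mulVec_sub, ha.2]
        abel
      · intro a _ b _ hab
        have := congrArg (fun z => z - x₂ + x₁) hab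
        simpa [sub_add_cancel] using this
      · intro b hb
        rw [Finset.mem_filter] at hb
        refine ⟨b - x₂ + x₁, ?_, ?_⟩
        · rw [Finset.mem_filter]
          refine ⟨Finset.mem_univ _, ?_⟩
          rw [Matrix.mulVec_add, Matrix.mulVec_sub, hb.2]
          abel
        · abel
    set N := (Finset.univ.filter (fun x => H *ᵥ x = H *ᵥ x₁)).card with hN
    have hkey : (N : ℝ≥0∞) * P {ω | X ω = x₁} = (N : ℝ≥0∞) * P {ω | X ω = x₂} := by
      rw [← nsmul_eq_mul, ← nsmul_eq_mul, ← hs1, hcards, ← hs2, ← hf1, ← hf2]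
      exact hSunif (H *ᵥ x₁) (H *ᵥ x₂)
    have hN0 : (N : ℝ≥0∞) ≠ 0 := by
      have : x₁ ∈ Finset.univ.filter (fun x => H *ᵥ x = H *ᵥ x₁) :=
        Finset.mem_filter.mpr ⟨Finset.mem_univ _, rfl⟩
      have hpos : 0 < N := Finset.card_pos.mpr ⟨x₁, this⟩
      exact_mod_cast hpos.ne'
    have hNtop : (N : ℝ≥0∞) ≠ ∞ := ENNReal.natCast_ne_top N
    have := congrArg (fun z => ((N : ℝ≥0∞))⁻¹ * z) hkey
    simpa [← mul_assoc, ENNReal.inv_mul_cancel hN0 hNtop] using this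
  set c := P {ω | X ω = 0} with hc
  have hXc : ∀ x, P {ω | X ω = x} = c := fun x => pconst x 0
  -- Step 2: security implies trivial intersections of kernels
  have hBinf : ∀ B : Matrix (Fin (n - k)) (Fin n) F,
      Function.Surjective (B.map (algebraMap F L)).mulVecLin →
      LinearMap.ker H.mulVecLin ⊓ LinearMap.ker (B.map (algebraMap F L)).mulVecLin = ⊥ := by
    intro B hsurj
    refine inf_ker_eq_bot H hH B hsurj ?_
    refine mutualInfo_zero_rank P X c hXc H.mulVecLin (B.map (algebraMap F L)).mulVecLin ?_
    simpa [Matrix.mulVecLin_apply] using hsec B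
  -- Step 3: minimum rank weight at least k+1
  have hmin : ∀ cdw : Fin n → L, H *ᵥ cdw = 0 → cdw ≠ 0 → k + 1 ≤ rankWeight F cdw :=
    fun cdw h1 h2 => rankWeight_lower_bound (le_of_lt hkn) H hBinf cdw h1 h2
  have hex := exists_codeword_weight hkn H hH hmin
  refine ⟨hm ▸ n_le_finrank hk hkn H hH hmin hex, ?_, ?_⟩
  · obtain ⟨c₀, h1, h2, h3⟩ := hex
    exact ⟨c₀, h1, 0, by simp, h2, by rwa [sub_zero]⟩
  · rintro e ⟨x, hx, y, hy, hxy, rfl⟩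
    refine hmin (x - y) ?_ (sub_ne_zero.mpr hxy)
    rw [Set.mem_setOf_eq] at hx hy
    rw [Matrix.mulVec_sub, hx, hy, sub_zero]
end

section
/- Let q be a prime power and L a field extension of Fq of degree m with m ≥ n. Let 1 ≤ k < n and let T ∈ L^{n×n} be invertible; write T^{−1} = [H; H₁] where H ∈ L^{k×n} consists of the first k rows of T^{−1} and H₁ ∈ L^{(n−k)×n} of the remaining rows. Suppose the code C = {x ∈ L^n : Hx = 0} has minimum rank distance k + 1. Let S be a random variable with values in L^k, let V be uniformly distributed on L^{n−k} and independent of S, and let X = T·(S; V) ∈ L^n, where (S; V) denotes the column vector obtained by stacking S on top of V. Then for every integer 0 ≤ μ ≤ n − k and every matrix B ∈ Fq^{μ×n} (acting on L^n via the embedding Fq ⊆ L), I(S; BX) = 0. -/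
set_option autoImplicit false

open Matrix MeasureTheory

/-- The column vector `(s; v) ∈ L^n` obtained by stacking `s ∈ L^k` on top of
`v ∈ L^{n-k}`. -/
def stackVec {L : Type*} {k n : ℕ} (s : Fin k → L) (v : Fin (n - k) → L) : Fin n → L :=
  fun i => if h : (i : ℕ) < k then s ⟨i, h⟩
    else v ⟨(i : ℕ) - k, by have := i.isLt; omega⟩


section Helpers

/-- Any subspace of dimension `≤ d` is contained in a subspace of dimension exactly `d`. -/
lemma exists_supmodule {F M : Type*} [Field F] [AddCommGroup M] [Module F M]
    [FiniteDimensional F M] (d : ℕ) (W : Submodule F M)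
    (h1 : Module.finrank F W ≤ d) (h2 : d ≤ Module.finrank F M) :
    ∃ W' : Submodule F M, W ≤ W' ∧ Module.finrank F W' = d := by
  obtain ⟨c, hc⟩ : ∃ c, Module.finrank F W + c = d := ⟨d - Module.finrank F W, by omega⟩
  clear h1
  induction c generalizing W with
  | zero => exact ⟨W, le_refl _, by omega⟩
  | succ c ih =>
    have hWtop : W ≠ ⊤ := by
      intro h
      rw [h, finrank_top] at hc
      omega
    have hlt : W < ⊤ := lt_top_iff_ne_top.2 hWtop
    obtain ⟨x, -, hx⟩ := SetLike.exists_of_lt hlt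
    have hx0 : x ≠ 0 := fun h => hx (h ▸ W.zero_mem)
    have hinf : W ⊓ Submodule.span F {x} = ⊥ := by
      rw [eq_bot_iff]
      rintro y ⟨hyW, hyS⟩
      obtain ⟨a, rfl⟩ := Submodule.mem_span_singleton.1 hyS
      rcases eq_or_ne a 0 with rfl | ha
      · simp
      · exact absurd ((inv_smul_smul₀ ha x) ▸ W.smul_mem a⁻¹ hyW) hx
    have hsum := Submodule.finrank_sup_add_finrank_inf_eq W (Submodule.span F {x})
    rw [hinf, finrank_bot, finrank_span_singleton hx0, add_zero] at hsum
    obtain ⟨W', hle, heq⟩ := ih (W ⊔ Submodule.span F {x}) (by omega)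
    exact ⟨W', le_trans le_sup_left hle, heq⟩

/-- If the coordinates of `x` are annihilated by a `d`-dimensional space of
`F`-linear relations, then the rank weight of `x` is at most `n - d`. -/
lemma rankWeight_add_le {F L : Type*} [Field F] [Field L] [Algebra F L] {n d : ℕ}
    (x : Fin n → L) (W : Submodule F (Fin n → F)) (hW : Module.finrank F W = d)
    (hann : ∀ w ∈ W, ∑ j, w j • x j = 0) : rankWeight F x + d ≤ n := by
  classical
  let φ : (Fin n → F) →ₗ[F] L := Fintype.linearCombination F x
  have hrange : LinearMap.range φ = Submodule.span F (Set.range x) :=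
    Fintype.range_linearCombination F x
  have hker : W ≤ LinearMap.ker φ := fun w hw => by
    simpa [φ, Fintype.linearCombination_apply] using hann w hw
  have h1 := LinearMap.finrank_range_add_finrank_ker φ
  rw [Module.finrank_fin_fun, hrange] at h1
  have h2 : d ≤ Module.finrank F (LinearMap.ker φ) := hW ▸ Submodule.finrank_mono hker
  unfold rankWeight
  omega

/-- Decompose a measure of a set according to the fibers of a finitely-valued map. -/
lemma measure_eq_sum_fiber {Ω β : Type*} [Fintype Ω] [MeasurableSpace Ω]
    [MeasurableSingletonClass Ω] [Fintype β] (P : Measure Ω) (E : Set Ω) (Z : Ω → β) :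
    P E = ∑ b : β, P (E ∩ {ω | Z ω = b}) := by
  classical
  rw [← measure_biUnion_finset (s := Finset.univ) (f := fun b => E ∩ {ω | Z ω = b})
    ?_ (fun _ _ => (Set.toFinite _).measurableSet)]
  · congr 1
    ext ω
    simp
  · intro b₁ _ b₂ _ hne
    simp only [Function.onFun, Set.disjoint_left]
    rintro ω ⟨-, h₁⟩ ⟨-, h₂⟩
    exact hne (h₁ ▸ h₂ ▸ rfl)

lemma sum_measure_eq_one {Ω β : Type*} [Fintype Ω] [MeasurableSpace Ω]
    [MeasurableSingletonClass Ω] [Fintype β] (P : Measure Ω) [IsProbabilityMeasure P]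
    (Z : Ω → β) : ∑ b : β, P {ω | Z ω = b} = 1 := by
  have h := measure_eq_sum_fiber P Set.univ Z
  simpa [measure_univ] using h.symm

lemma sum_toReal_measure_eq_one {Ω β : Type*} [Fintype Ω] [MeasurableSpace Ω]
    [MeasurableSingletonClass Ω] [Fintype β] (P : Measure Ω) [IsProbabilityMeasure P]
    (Z : Ω → β) : ∑ b : β, (P {ω | Z ω = b}).toReal = 1 := by
  rw [← ENNReal.toReal_sum (fun a _ => measure_ne_top P _), sum_measure_eq_one P Z,
    ENNReal.toReal_one]

/-- Independence implies zero mutual information. -/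
lemma mutualInfo_eq_zero_of_indep {Ω α β : Type*} [Fintype Ω] [MeasurableSpace Ω]
    [MeasurableSingletonClass Ω] [Fintype α] [Fintype β]
    (P : Measure Ω) [IsProbabilityMeasure P] (X : Ω → α) (Y : Ω → β)
    (h : ∀ a b, P {ω | X ω = a ∧ Y ω = b} = P {ω | X ω = a} * P {ω | Y ω = b}) :
    mutualInfo P X Y = 0 := by
  classical
  set pa : α → ℝ := fun a => (P {ω | X ω = a}).toReal with hpa
  set qb : β → ℝ := fun b => (P {ω | Y ω = b}).toReal with hqb
  have hp1 : ∑ a : α, pa a = 1 := sum_toReal_measure_eq_one P X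
  have hq1 : ∑ b : β, qb b = 1 := sum_toReal_measure_eq_one P Y
  have hjoint : ∀ (c : α × β), (P {ω | (X ω, Y ω) = c}).toReal = pa c.1 * qb c.2 := by
    rintro ⟨a, b⟩
    have : {ω | (X ω, Y ω) = (a, b)} = {ω | X ω = a ∧ Y ω = b} := by
      ext ω; simp [Prod.ext_iff]
    rw [this, h a b, ENNReal.toReal_mul]
  have hsplit : ∀ (a : α) (b : β), (pa a * qb b) * Real.log (pa a * qb b)
      = (pa a * Real.log (pa a)) * qb b + pa a * (qb b * Real.log (qb b)) := by
    intro a b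
    rcases eq_or_ne (pa a) 0 with h0 | h0
    · simp [h0]
    rcases eq_or_ne (qb b) 0 with h1 | h1
    · simp [h1]
    rw [Real.log_mul h0 h1]
    ring
  have hpair : entropy P (fun ω => (X ω, Y ω)) = entropy P X + entropy P Y := by
    unfold entropy
    rw [Fintype.sum_prod_type (f := fun c => (P {ω | (X ω, Y ω) = c}).toReal
      * Real.log (P {ω | (X ω, Y ω) = c}).toReal)]
    have : ∀ a : α, ∑ b : β, (P {ω | (X ω, Y ω) = (a, b)}).toReal
        * Real.log (P {ω | (X ω, Y ω) = (a, b)}).toReal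
        = (pa a * Real.log (pa a)) + pa a * (∑ b, qb b * Real.log (qb b)) := by
      intro a
      have : ∀ b : β, (P {ω | (X ω, Y ω) = (a, b)}).toReal
          * Real.log (P {ω | (X ω, Y ω) = (a, b)}).toReal
          = (pa a * Real.log (pa a)) * qb b + pa a * (qb b * Real.log (qb b)) := by
        intro b
        rw [hjoint (a, b)]
        exact hsplit a b
      rw [Finset.sum_congr rfl (fun b _ => this b), Finset.sum_add_distrib,
        ← Finset.mul_sum, ← Finset.mul_sum, hq1, mul_one]
    rw [Finset.sum_congr rfl (fun a _ => this a), Finset.sum_add_distrib,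
      ← Finset.sum_mul, hp1, one_mul]
    ring
  unfold mutualInfo
  rw [hpair]
  ring

end Helpers

/-- Encoder structure for coset coding: with `T` invertible, `H` the first `k` rows of
`T⁻¹` whose kernel code is MRD (minimum rank distance `k+1`), `V` uniform on `L^{n-k}`
independent of `S`, and `X = T·(S;V)`, the scheme is universally secure under `μ`
observations for every `μ ≤ n - k`. -/
theorem encoder_parityCheck_MRD_universally_secure
    (q m : ℕ) (hq : IsPrimePow q)
    (F L : Type) [Field F] [Fintype F] (hF : Fintype.card F = q)
    [Field L] [Fintype L] [Algebra F L] (hm : Module.finrank F L = m)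
    (n k : ℕ) (hmn : n ≤ m) (hk : 1 ≤ k) (hkn : k < n)
    (T : Matrix (Fin n) (Fin n) L) (hT : IsUnit T)
    (hMRD : minRankDistEq F
      {x : Fin n → L | (T⁻¹).submatrix (Fin.castLE hkn.le) id *ᵥ x = 0} (k + 1))
    (Ω : Type) [Fintype Ω] [MeasurableSpace Ω] [MeasurableSingletonClass Ω]
    (P : Measure Ω) [IsProbabilityMeasure P]
    (S : Ω → Fin k → L) (V : Ω → Fin (n - k) → L)
    (hVunif : ∀ v₁ v₂ : Fin (n - k) → L, P {ω | V ω = v₁} = P {ω | V ω = v₂})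
    (hindep : ∀ (s : Fin k → L) (v : Fin (n - k) → L),
      P {ω | S ω = s ∧ V ω = v} = P {ω | S ω = s} * P {ω | V ω = v})
    (X : Ω → Fin n → L)
    (hX : ∀ ω, X ω = T *ᵥ stackVec (S ω) (V ω)) :
    ∀ (μ : ℕ), μ ≤ n - k → ∀ B : Matrix (Fin μ) (Fin n) F,
      mutualInfo P S (fun ω => (B.map (algebraMap F L)) *ᵥ X ω) = 0 := by
  classical
  intro μ hμ B
  set M : Matrix (Fin μ) (Fin n) L := B.map (algebraMap F L) with hM
  set Hm : Matrix (Fin k) (Fin n) L := (T⁻¹).submatrix (Fin.castLE hkn.le) id with hHm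
  -- basic facts about T
  have hTdet : IsUnit T.det := (Matrix.isUnit_iff_isUnit_det T).1 hT
  have hTinv : ∀ z : Fin n → L, T⁻¹ *ᵥ (T *ᵥ z) = z := by
    intro z
    rw [Matrix.mulVec_mulVec, Matrix.nonsing_inv_mul T hTdet, Matrix.one_mulVec]
  have hTinj : ∀ z : Fin n → L, T *ᵥ z = 0 → z = 0 := by
    intro z h
    have h2 := hTinv z
    rw [h, Matrix.mulVec_zero] at h2
    exact h2.symm
  -- membership of the coset code
  have hC0 : ∀ v : Fin (n - k) → L, Hm *ᵥ (T *ᵥ stackVec (0 : Fin k → L) v) = 0 := by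
    intro v
    funext i
    have h1 : (Hm *ᵥ (T *ᵥ stackVec (0 : Fin k → L) v)) i
        = (T⁻¹ *ᵥ (T *ᵥ stackVec (0 : Fin k → L) v)) (Fin.castLE hkn.le i) := rfl
    rw [h1, hTinv]
    have h2 : ((Fin.castLE hkn.le i : Fin n) : ℕ) < k := i.isLt
    simp [stackVec, h2]
  have hCrank : ∀ x : Fin n → L, Hm *ᵥ x = 0 → x ≠ 0 → k + 1 ≤ rankWeight F x := by
    intro x hx hx0
    refine hMRD.2 ⟨x, hx, 0, Matrix.mulVec_zero _, hx0, by rw [sub_zero]⟩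
  -- construct the extended family of parity checks b
  have hfinfun : Module.finrank F (Fin n → F) = n := Module.finrank_fin_fun F
  have hRrank : Module.finrank F
      (Submodule.span F (Set.range (fun i : Fin μ => B i))) ≤ μ := by
    refine le_trans (finrank_span_le_card _) ?_
    rw [Set.toFinset_range]
    exact le_trans (Finset.card_image_le) (by simp)
  obtain ⟨Wsub, hRW, hWrank⟩ := exists_supmodule (F := F) (n - k)
    (Submodule.span F (Set.range (fun i : Fin μ => B i)))
    (le_trans hRrank hμ) (by omega)
  have hBmem : ∀ i : Fin μ, B i ∈ Wsub :=
    fun i => hRW (Submodule.subset_span ⟨i, rfl⟩)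
  set bb := Module.finBasisOfFinrankEq F Wsub hWrank with hbb
  set b : Fin (n - k) → (Fin n → F) := fun i => (bb i : Fin n → F) with hb
  have hbW : ∀ i, b i ∈ Wsub := fun i => (bb i).2
  have hbspan : Submodule.span F (Set.range b) = Wsub := by
    have h1 : Set.range b = Wsub.subtype '' Set.range bb := by
      rw [← Set.range_comp]; rfl
    rw [h1, Submodule.span_image, bb.span_eq, Submodule.map_subtype_top]
  -- the pairing
  set φ : (Fin n → L) → (Fin n → F) →ₗ[F] L :=
    fun x => Fintype.linearCombination F x with hφdef
  have hφ : ∀ (x : Fin n → L) (w : Fin n → F), φ x w = ∑ j, w j • x j :=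
    fun x w => rfl
  have hMrow : ∀ (x : Fin n → L) (i : Fin μ), (M *ᵥ x) i = φ x (B i) := by
    intro x i
    rw [hφ]
    simp [hM, Matrix.mulVec, dotProduct, Matrix.map_apply, Algebra.smul_def]
  set B' : Matrix (Fin (n - k)) (Fin n) L :=
    Matrix.of (fun i j => algebraMap F L (b i j)) with hB'
  have hB'row : ∀ (x : Fin n → L) (i : Fin (n - k)), (B' *ᵥ x) i = φ x (b i) := by
    intro x i
    rw [hφ]
    simp [hB', Matrix.mulVec, dotProduct, Algebra.smul_def]
  -- B' x determines M x
  have hdet2 : ∀ x y : Fin n → L, B' *ᵥ x = B' *ᵥ y → M *ᵥ x = M *ᵥ y := by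
    intro x y hxy
    funext i
    rw [hMrow, hMrow]
    have hBi : B i ∈ Submodule.span F (Set.range b) := hbspan ▸ hBmem i
    obtain ⟨a, ha⟩ := (Submodule.mem_span_range_iff_exists_fun F).1 hBi
    rw [← ha, map_sum, map_sum]
    refine Finset.sum_congr rfl fun t _ => ?_
    rw [_root_.map_smul, _root_.map_smul, ← hB'row, ← hB'row, hxy]
  -- the stacking map is linear
  set ι : (Fin (n - k) → L) →ₗ[L] (Fin n → L) :=
    { toFun := fun v => stackVec (0 : Fin k → L) v
      map_add' := by
        intro u v
        funext i
        by_cases h : (i : ℕ) < k <;> simp [stackVec, h]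
      map_smul' := by
        intro c v
        funext i
        by_cases h : (i : ℕ) < k <;> simp [stackVec, h] } with hι
  set Φ : (Fin (n - k) → L) →ₗ[L] (Fin (n - k) → L) :=
    B'.mulVecLin ∘ₗ T.mulVecLin ∘ₗ ι with hΦdef
  have hΦ : ∀ v, Φ v = B' *ᵥ (T *ᵥ stackVec (0 : Fin k → L) v) := fun v => rfl
  have hΦinj : Function.Injective Φ := by
    refine (injective_iff_map_eq_zero Φ).2 fun v hv => ?_
    rw [hΦ] at hv
    set x : Fin n → L := T *ᵥ stackVec (0 : Fin k → L) v with hx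
    have hxrank : rankWeight F x + (n - k) ≤ n := by
      refine rankWeight_add_le x Wsub hWrank ?_
      intro w hw
      rw [← hbspan] at hw
      have hker : Submodule.span F (Set.range b) ≤ LinearMap.ker (φ x) := by
        rw [Submodule.span_le]
        rintro _ ⟨i, rfl⟩
        have := congrFun hv i
        rw [hB'row] at this
        exact this
      have := hker hw
      rw [LinearMap.mem_ker] at this
      rw [← hφ]
      exact this
    have hx0 : x = 0 := by
      by_contra h
      have := hCrank x (hC0 v) h
      omega
    have hs0 : stackVec (0 : Fin k → L) v = 0 := hTinj _ hx0
    funext j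
    have hj := congrFun hs0 ⟨k + (j : ℕ), by omega⟩
    have hnlt : ¬ ((k + (j : ℕ)) < k) := by omega
    simp only [stackVec, hnlt, dif_neg, not_false_iff, Pi.zero_apply] at hj
    have heq : (⟨k + (j : ℕ) - k, by omega⟩ : Fin (n - k)) = j := by
      apply Fin.ext
      simp
    rw [heq] at hj
    exact hj
  have hΦsurj : Function.Surjective Φ := (LinearMap.injective_iff_surjective).1 hΦinj
  -- main algebraic fact
  have hmain : ∀ x : Fin n → L, ∃ v : Fin (n - k) → L,
      M *ᵥ (T *ᵥ stackVec (0 : Fin k → L) v) = M *ᵥ x := by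
    intro x
    obtain ⟨v, hv⟩ := hΦsurj (B' *ᵥ x)
    rw [hΦ] at hv
    exact ⟨v, hdet2 _ _ hv⟩
  -- probabilistic part
  set f : (Fin k → L) → (Fin μ → L) := fun s => M *ᵥ (T *ᵥ stackVec s 0) with hf
  set g : (Fin (n - k) → L) → (Fin μ → L) :=
    fun v => M *ᵥ (T *ᵥ stackVec (0 : Fin k → L) v) with hg
  have hstacksplit : ∀ (s : Fin k → L) (v : Fin (n - k) → L),
      stackVec s v = stackVec s 0 + stackVec (0 : Fin k → L) v := by
    intro s v
    funext i
    by_cases h : (i : ℕ) < k <;> simp [stackVec, h]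
  have hW : ∀ ω, M *ᵥ X ω = f (S ω) + g (V ω) := by
    intro ω
    rw [hX ω, hstacksplit, Matrix.mulVec_add, Matrix.mulVec_add]
  have hg_add : ∀ u v, g (u + v) = g u + g v := by
    intro u v
    rw [hg]
    show M *ᵥ (T *ᵥ (ι (u + v))) = _
    rw [map_add, Matrix.mulVec_add, Matrix.mulVec_add]
    rfl
  have hg_sub : ∀ u v, g (u - v) = g u - g v := by
    intro u v
    rw [hg]
    show M *ᵥ (T *ᵥ (ι (u - v))) = _
    rw [map_sub, Matrix.mulVec_sub, Matrix.mulVec_sub]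
    rfl
  have hfg : ∀ s, ∃ v, g v = f s := fun s => hmain (T *ᵥ stackVec s 0)
  set p0 : ENNReal := P {ω | V ω = (0 : Fin (n - k) → L)} with hp0
  have hPV : ∀ v, P {ω | V ω = v} = p0 := fun v => hVunif v 0
  set c : (Fin μ → L) → ENNReal := fun y => ∑ v : Fin (n - k) → L,
    if g v = y then p0 else 0 with hc
  have hc_shift : ∀ (y : Fin μ → L) (u : Fin (n - k) → L), c (y + g u) = c y := by
    intro y u
    rw [hc]
    refine Fintype.sum_equiv (Equiv.subRight u) _ _ fun v => ?_
    simp only [Equiv.subRight_apply, hg_sub]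
    by_cases h : g v = y + g u
    · rw [if_pos h, if_pos (by rw [h]; abel)]
    · rw [if_neg h, if_neg fun hcon => h (sub_eq_iff_eq_add.mp hcon)]
  have hcf : ∀ (w : Fin μ → L) (s s' : Fin k → L), c (w - f s) = c (w - f s') := by
    intro w s s'
    obtain ⟨v1, hv1⟩ := hfg s
    obtain ⟨v2, hv2⟩ := hfg s'
    have h1 : w - f s' = (w - f s) + g (v1 - v2) := by
      rw [hg_sub, hv1, hv2]
      abel
    rw [h1, hc_shift]
  -- joint distribution
  have hjoint : ∀ (s : Fin k → L) (w : Fin μ → L),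
      P {ω | S ω = s ∧ M *ᵥ X ω = w} = P {ω | S ω = s} * c (w - f s) := by
    intro s w
    rw [measure_eq_sum_fiber P {ω | S ω = s ∧ M *ᵥ X ω = w} V]
    have hterm : ∀ v : Fin (n - k) → L,
        P ({ω | S ω = s ∧ M *ᵥ X ω = w} ∩ {ω | V ω = v})
        = if g v = w - f s then P {ω | S ω = s} * p0 else 0 := by
      intro v
      by_cases h : g v = w - f s
      · rw [if_pos h]
        have hset : {ω | S ω = s ∧ M *ᵥ X ω = w} ∩ {ω | V ω = v}
            = {ω | S ω = s ∧ V ω = v} := by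
          ext ω
          simp only [Set.mem_inter_iff, Set.mem_setOf_eq]
          constructor
          · rintro ⟨⟨h1, h2⟩, h3⟩
            exact ⟨h1, h3⟩
          · rintro ⟨h1, h2⟩
            refine ⟨⟨h1, ?_⟩, h2⟩
            rw [hW ω, h1, h2]
            rw [eq_sub_iff_add_eq] at h
            rw [← h]
            abel
        rw [hset, hindep, hPV]
      · rw [if_neg h]
        have hset : {ω | S ω = s ∧ M *ᵥ X ω = w} ∩ {ω | V ω = v} = ∅ := by
          ext ω
          simp only [Set.mem_inter_iff, Set.mem_setOf_eq, Set.mem_empty_iff_false,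
            iff_false, not_and]
          rintro ⟨h1, h2⟩ h3
          apply h
          rw [hW ω, h1, h3] at h2
          rw [eq_sub_iff_add_eq, add_comm]
          exact h2
        rw [hset, measure_empty]
    rw [Finset.sum_congr rfl (fun v _ => hterm v), hc]
    rw [Finset.mul_sum]
    refine Finset.sum_congr rfl fun v _ => ?_
    by_cases h : g v = w - f s
    · rw [if_pos h, if_pos h]
    · rw [if_neg h, if_neg h, mul_zero]
  -- marginal distribution
  have hmarg : ∀ w : Fin μ → L,
      P {ω | M *ᵥ X ω = w} = ∑ s : Fin k → L, P {ω | S ω = s} * c (w - f s) := by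
    intro w
    rw [measure_eq_sum_fiber P {ω | M *ᵥ X ω = w} S]
    refine Finset.sum_congr rfl fun s _ => ?_
    rw [← hjoint]
    congr 1
    ext ω
    simp only [Set.mem_inter_iff, Set.mem_setOf_eq]
    tauto
  -- independence
  have hindep2 : ∀ (s : Fin k → L) (w : Fin μ → L),
      P {ω | S ω = s ∧ M *ᵥ X ω = w}
      = P {ω | S ω = s} * P {ω | M *ᵥ X ω = w} := by
    intro s w
    rw [hjoint, hmarg]
    have : ∑ s' : Fin k → L, P {ω | S ω = s'} * c (w - f s')
        = ∑ s' : Fin k → L, P {ω | S ω = s'} * c (w - f s) := by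
      refine Finset.sum_congr rfl fun s' _ => ?_
      rw [hcf w s' s]
    rw [this, ← Finset.sum_mul, sum_measure_eq_one P S, one_mul]
  exact mutualInfo_eq_zero_of_indep P S (fun ω => M *ᵥ X ω) hindep2
end
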